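/- Let H be a Hilbert space and (H_i^⊥) a family of closed subspaces whose block-Gram matrix P (with blocks the orthogonal projections H_j^⊥ → H_i^⊥) defines a bounded, non-negative self-adjoint operator on ⊕_{l2,i} H_i^⊥. Then the summation map ι: ⊕_i H_i^⊥ → H satisfies ι* ι = P, and ι extends continuously to ⊕_{l2,i} H_i^⊥ with ‖ι‖² = ‖P‖. -/

import Mathlib

open scoped InnerProductSpace

set_option synthInstance.maxHeartbeats 1000000 in
set_option maxHeartbeats 1000000 in
open Filter Finset Topology in
/-- If the block-Gram matrix `P` of a family of closed subspaces (blocks: orthogonal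
projections `(Hs j)ᗮ → (Hs i)ᗮ`) defines a bounded non-negative self-adjoint operator on the
Hilbert direct sum `⊕_{ℓ²} (Hs i)ᗮ`, then the summation map `ι` extends continuously to the
Hilbert direct sum, satisfies `ι† ∘ ι = P`, and `‖ι₀‖² = ‖P‖`. -/
theorem stmt11 {H : Type*} [NormedAddCommGroup H] [InnerProductSpace ℂ H] [CompleteSpace H]
    {ι : Type*} [DecidableEq ι] (Hs : ι → Submodule ℂ H) [∀ i, CompleteSpace (Hs i)]
    (P : lp (fun i => ↥(Hs i)ᗮ) 2 →L[ℂ] lp (fun i => ↥(Hs i)ᗮ) 2)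
    (hP : ∀ (j : ι) (v : ↥(Hs j)ᗮ) (i : ι),
      P (lp.single 2 j v) i = Submodule.orthogonalProjection (Hs i)ᗮ (v : H))
    (hPsa : IsSelfAdjoint P)
    (hPnonneg : ∀ x : lp (fun i => ↥(Hs i)ᗮ) 2, 0 ≤ (⟪P x, x⟫_ℂ).re) :
    ∃ ι₀ : lp (fun i => ↥(Hs i)ᗮ) 2 →L[ℂ] H,
      (∀ (i : ι) (v : ↥(Hs i)ᗮ), ι₀ (lp.single 2 i v) = (v : H)) ∧
      (ContinuousLinearMap.adjoint ι₀).comp ι₀ = P ∧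
      ‖ι₀‖ ^ 2 = ‖P‖ := by
  classical
  -- key identity on single elements
  have hsingle : ∀ (i : ι) (v : ↥(Hs i)ᗮ) (j : ι) (w : ↥(Hs j)ᗮ),
      ⟪P (lp.single 2 i v), lp.single 2 j w⟫_ℂ = ⟪(v : H), (w : H)⟫_ℂ := by
    intro i v j w
    rw [lp.inner_single_right, Submodule.coe_inner, hP,
      ← Submodule.coe_inner, Submodule.inner_orthogonalProjectionOnto_eq_of_mem_right]
  -- finite approximants
  set T : Finset ι → lp (fun i => ↥(Hs i)ᗮ) 2 → lp (fun i => ↥(Hs i)ᗮ) 2 := fun s x => ∑ i ∈ s, lp.single 2 i (x i) with hT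
  have hfin : ∀ (s : Finset ι) (x y : lp (fun i => ↥(Hs i)ᗮ) 2),
      ⟪P (T s x), T s y⟫_ℂ = ⟪∑ i ∈ s, ((x i : H)), ∑ j ∈ s, ((y j : H))⟫_ℂ := by
    intro s x y
    simp only [hT, map_sum, sum_inner, inner_sum]
    exact Finset.sum_congr rfl fun i _ => Finset.sum_congr rfl fun j _ =>
      hsingle _ _ _ _
  have hTtend : ∀ x : lp (fun i => ↥(Hs i)ᗮ) 2, Tendsto (fun s => T s x) atTop (𝓝 x) :=
    fun x => lp.hasSum_single (by norm_num) x
  -- norm of finite approximants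
  have hTnorm : ∀ (s : Finset ι) (x : lp (fun i => ↥(Hs i)ᗮ) 2), ‖T s x‖ ^ 2 = ∑ i ∈ s, ‖(x i : H)‖ ^ 2 := by
    intro s x
    have := lp.norm_sum_single (p := 2) (by norm_num) (fun i => x i) s
    simp only [ENNReal.toReal_ofNat, Real.rpow_two] at this
    rw [hT]
    simp only [this]
    exact Finset.sum_congr rfl fun i _ => by rw [Submodule.norm_coe]
  -- summability of the vector-valued family
  have hsummable : ∀ x : lp (fun i => ↥(Hs i)ᗮ) 2, Summable (fun i => ((x i : H))) := by
    intro x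
    rw [summable_iff_vanishing_norm]
    intro ε hε
    have hx2 : Summable (fun i => ‖(x i : H)‖ ^ 2) := by
      have := (lp.memℓp x).summable (by norm_num)
      simp only [ENNReal.toReal_ofNat, Real.rpow_two] at this
      exact this.congr fun i => by rw [Submodule.norm_coe]
    have hδ : 0 < ε ^ 2 / (‖P‖ + 1) := by positivity
    obtain ⟨s, hs⟩ := summable_iff_vanishing_norm.1 hx2 _ hδ
    refine ⟨s, fun t ht => ?_⟩
    have htail : ∑ i ∈ t, ‖(x i : H)‖ ^ 2 < ε ^ 2 / (‖P‖ + 1) := by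
      have := hs t ht
      rwa [Real.norm_of_nonneg (Finset.sum_nonneg fun i _ => by positivity)] at this
    have hsq : ‖∑ i ∈ t, ((x i : H))‖ ^ 2 < ε ^ 2 := by
      have h1 : ‖∑ i ∈ t, ((x i : H))‖ ^ 2 = (⟪P (T t x), T t x⟫_ℂ).re := by
        rw [hfin t x x, ← RCLike.re_to_complex]; exact (inner_self_eq_norm_sq _).symm
      have h2 : (⟪P (T t x), T t x⟫_ℂ).re ≤ ‖P‖ * ‖T t x‖ ^ 2 := by
        calc (⟪P (T t x), T t x⟫_ℂ).re ≤ ‖⟪P (T t x), T t x⟫_ℂ‖ :=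
              Complex.re_le_norm _
          _ ≤ ‖P (T t x)‖ * ‖T t x‖ := norm_inner_le_norm _ _
          _ ≤ (‖P‖ * ‖T t x‖) * ‖T t x‖ :=
              mul_le_mul_of_nonneg_right (P.le_opNorm _) (norm_nonneg _)
          _ = ‖P‖ * ‖T t x‖ ^ 2 := by ring
      have h3 : ‖P‖ * ‖T t x‖ ^ 2 < ε ^ 2 := by
        rw [hTnorm t x]
        calc ‖P‖ * ∑ i ∈ t, ‖(x i : H)‖ ^ 2
            ≤ (‖P‖ + 1) * ∑ i ∈ t, ‖(x i : H)‖ ^ 2 := by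
              apply mul_le_mul_of_nonneg_right (by linarith)
                (Finset.sum_nonneg fun i _ => by positivity)
          _ < (‖P‖ + 1) * (ε ^ 2 / (‖P‖ + 1)) := by
              apply mul_lt_mul_of_pos_left htail (by positivity)
          _ = ε ^ 2 := by field_simp
      linarith
    exact lt_of_pow_lt_pow_left₀ 2 hε.le hsq
  -- the candidate linear map
  set Sraw : lp (fun i => ↥(Hs i)ᗮ) 2 →ₗ[ℂ] H :=
    { toFun := fun x => ∑' i, ((x i : H))
      map_add' := by
        intro x y
        have h : ∀ i, (((x + y) i : H)) = ((x i : H)) + ((y i : H)) := fun i => by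
          simp [lp.coeFn_add]
        calc (∑' i, (((x + y) i : H))) = ∑' i, (((x i : H)) + ((y i : H))) := tsum_congr h
          _ = _ := Summable.tsum_add (hsummable x) (hsummable y)
      map_smul' := by
        intro c x
        have h : ∀ i, (((c • x) i : H)) = c • ((x i : H)) := fun i => by
          simp [lp.coeFn_smul]
        calc (∑' i, (((c • x) i : H))) = ∑' i, c • ((x i : H)) := tsum_congr h
          _ = c • ∑' i, ((x i : H)) := tsum_const_smul'' c } with hSraw
  have hSrawHasSum : ∀ x : lp (fun i => ↥(Hs i)ᗮ) 2, HasSum (fun i => ((x i : H))) (Sraw x) :=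
    fun x => (hsummable x).hasSum
  -- global inner-product identity
  have hinner : ∀ x y : lp (fun i => ↥(Hs i)ᗮ) 2, ⟪P x, y⟫_ℂ = ⟪Sraw x, Sraw y⟫_ℂ := by
    intro x y
    have h1 : Tendsto (fun s => ⟪P (T s x), T s y⟫_ℂ) atTop (𝓝 ⟪P x, y⟫_ℂ) :=
      (((P.continuous.tendsto x).comp (hTtend x)).inner (hTtend y))
    have h2 : Tendsto (fun s : Finset ι =>
        ⟪∑ i ∈ s, ((x i : H)), ∑ j ∈ s, ((y j : H))⟫_ℂ) atTop
        (𝓝 ⟪Sraw x, Sraw y⟫_ℂ) :=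
      (hSrawHasSum x).inner (hSrawHasSum y)
    refine tendsto_nhds_unique ?_ h2
    exact h1.congr fun s => hfin s x y
  -- the boundedness estimate
  have hbound : ∀ x : lp (fun i => ↥(Hs i)ᗮ) 2, ‖Sraw x‖ ≤ Real.sqrt ‖P‖ * ‖x‖ := by
    intro x
    have h1 : ‖Sraw x‖ ^ 2 ≤ (Real.sqrt ‖P‖ * ‖x‖) ^ 2 := by
      have := hinner x x
      have h2 : ‖Sraw x‖ ^ 2 = (⟪P x, x⟫_ℂ).re := by
        rw [this, ← RCLike.re_to_complex]; exact (inner_self_eq_norm_sq _).symm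
      rw [h2, mul_pow, Real.sq_sqrt (norm_nonneg P)]
      calc (⟪P x, x⟫_ℂ).re ≤ ‖⟪P x, x⟫_ℂ‖ := Complex.re_le_norm _
        _ ≤ ‖P x‖ * ‖x‖ := norm_inner_le_norm _ _
        _ ≤ (‖P‖ * ‖x‖) * ‖x‖ :=
            mul_le_mul_of_nonneg_right (P.le_opNorm _) (norm_nonneg _)
        _ = ‖P‖ * ‖x‖ ^ 2 := by ring
    exact le_of_pow_le_pow_left₀ two_ne_zero (by positivity) h1
  set ι₀ : lp (fun i => ↥(Hs i)ᗮ) 2 →L[ℂ] H := Sraw.mkContinuous (Real.sqrt ‖P‖) hbound with hι₀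
  have hι₀app : ∀ x : lp (fun i => ↥(Hs i)ᗮ) 2, ι₀ x = Sraw x := fun x => rfl
  have hι₀single : ∀ (i : ι) (v : ↥(Hs i)ᗮ), ι₀ (lp.single 2 i v) = (v : H) := by
    intro i v
    have h1 := hSrawHasSum (lp.single 2 i v)
    have h2 : HasSum (fun j => ((((lp.single 2 i v : lp (fun k => ↥(Hs k)ᗮ) 2) j : ↥(Hs j)ᗮ)) : H)) ((v : H)) := by
      convert hasSum_ite_eq i ((v : H)) with j
      by_cases hj : j = i
      · subst hj; simp [lp.single_apply_self]
      · rw [lp.single_apply_ne (E := fun k => ↥(Hs k)ᗮ) 2 i v hj]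
        simp [hj]
    exact (hι₀app _).trans (h1.unique h2)
  have hcomp : (ContinuousLinearMap.adjoint ι₀).comp ι₀ = P := by
    refine ContinuousLinearMap.ext fun x => ?_
    refine ext_inner_right ℂ fun y => ?_
    rw [ContinuousLinearMap.comp_apply, ContinuousLinearMap.adjoint_inner_left,
      hι₀app, hι₀app, ← hinner]
  refine ⟨ι₀, hι₀single, hcomp, ?_⟩
  have := ContinuousLinearMap.norm_adjoint_comp_self ι₀
  rw [hcomp] at this
  rw [this]; ring
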